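/- Let G be an edge-minimal edge-colored graph on n vertices and v a vertex with s = d^c(v). Then 2·rt(v) ≥ Σ_{x ∈ N(v)} (d^c(x) + d^c(v) − n) + d(v) · Σ_{j=1}^{s} (dⱼ − 1) − Σ_{i=1}^{s} dᵢ(dᵢ − 1) − Σ_{y ∈ N_!(v)} d_{c(vy)}(y, N(v)), where the right-hand side is interpreted in the integers. -/

import Mathlib

/-- The triangle on vertices `u`, `v`, `w` exists in `G` and is rainbow under the
edge-coloring `c`, i.e. its three edges receive pairwise distinct colors. -/
def IsRainbowTri {V : Type*} (G : SimpleGraph V) (c : Sym2 V → ℕ) (u v w : V) : Prop :=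
  G.Adj u v ∧ G.Adj u w ∧ G.Adj v w ∧
    c s(u, v) ≠ c s(u, w) ∧ c s(u, v) ≠ c s(v, w) ∧ c s(u, w) ≠ c s(v, w)

/-- The color degree of `v`: the number of distinct colors on edges incident with `v`. -/
noncomputable def colorDeg {V : Type*} (G : SimpleGraph V) (c : Sym2 V → ℕ) (v : V) : ℕ :=
  Set.ncard {β : ℕ | ∃ u, G.Adj v u ∧ c s(v, u) = β}


/-- `rtE G c v x` : the number of rainbow triangles of `G` containing the edge `vx`. -/
noncomputable def rtE {V : Type*} (G : SimpleGraph V) (c : Sym2 V → ℕ) (v x : V) : ℕ :=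
  Set.ncard {w : V | IsRainbowTri G c v x w}

/-- `NColor G c v β` : the `β`-neighborhood of `v`, i.e. the neighbors `u` of `v`
with `c(vu) = β`. -/
def NColor {V : Type*} [Fintype V] [DecidableEq V] (G : SimpleGraph V)
    [DecidableRel G.Adj] (c : Sym2 V → ℕ) (v : V) (β : ℕ) : Finset V :=
  (G.neighborFinset v).filter fun u => c s(v, u) = β

/-- `dColor G c v β = d_β(v)`, the number of neighbors of `v` joined to `v`
by an edge of color `β`. -/
def dColor {V : Type*} [Fintype V] [DecidableEq V] (G : SimpleGraph V)
    [DecidableRel G.Adj] (c : Sym2 V → ℕ) (v : V) (β : ℕ) : ℕ :=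
  (NColor G c v β).card

/-- `dColorIn G c y β X = d_β(y, X)`, the number of neighbors of `y` in `X` joined
to `y` by an edge of color `β`. -/
def dColorIn {V : Type*} [Fintype V] [DecidableEq V] (G : SimpleGraph V)
    [DecidableRel G.Adj] (c : Sym2 V → ℕ) (y : V) (β : ℕ) (X : Finset V) : ℕ :=
  (X.filter fun u => G.Adj y u ∧ c s(y, u) = β).card

/-- `NBangF G c v = N_!(v)`, the set of neighbors `y` of `v` such that the color
`c(vy)` appears exactly once at `v`. -/
def NBangF {V : Type*} [Fintype V] [DecidableEq V] (G : SimpleGraph V)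
    [DecidableRel G.Adj] (c : Sym2 V → ℕ) (v : V) : Finset V :=
  (G.neighborFinset v).filter fun y => dColor G c v (c s(v, y)) = 1

/-- `G` is edge-minimal: deleting any edge decreases the color degree of one of
its endpoints. -/
def EdgeMinimal {V : Type*} (G : SimpleGraph V) (c : Sym2 V → ℕ) : Prop :=
  ∀ u w : V, G.Adj u w →
    colorDeg (G.deleteEdges {s(u, w)}) c u < colorDeg G c u ∨
    colorDeg (G.deleteEdges {s(u, w)}) c w < colorDeg G c w

/-- `rtV G c v` : the number of rainbow triangles of `G` containing the vertex `v`
(counted as unordered pairs `{x, y}` completing `v` to a rainbow triangle). -/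
noncomputable def rtV {V : Type*} (G : SimpleGraph V) (c : Sym2 V → ℕ) (v : V) : ℕ :=
  Set.ncard {p : Sym2 V | ∃ x y : V, p = s(x, y) ∧ IsRainbowTri G c v x y}

section A
variable {V : Type*} [Fintype V] [DecidableEq V] (G : SimpleGraph V) [DecidableRel G.Adj]
  (c : Sym2 V → ℕ)

instance (u v w : V) : Decidable (IsRainbowTri G c u v w) := by
  unfold IsRainbowTri; infer_instance

lemma colorDeg_eq (v : V) :
    colorDeg G c v = ((G.neighborFinset v).image fun u => c s(v, u)).card := by
  rw [colorDeg, show {β : ℕ | ∃ u, G.Adj v u ∧ c s(v, u) = β}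
      = ↑((G.neighborFinset v).image fun u => c s(v, u)) by
    ext β; simp [eq_comm]]
  exact Set.ncard_coe_finset _

lemma colorDeg_del (v w : V)
    (h : ∀ γ y, G.Adj v y → c s(v, y) = γ → ∃ z, G.Adj v z ∧ z ≠ w ∧ c s(v, z) = γ) :
    colorDeg (G.deleteEdges {s(v, w)}) c v = colorDeg G c v := by
  unfold colorDeg
  congr 1
  ext γ
  simp only [Set.mem_setOf_eq, SimpleGraph.deleteEdges_adj, Set.mem_singleton_iff]
  constructor
  · rintro ⟨u, ⟨hadj, _⟩, hc⟩; exact ⟨u, hadj, hc⟩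
  · rintro ⟨u, hadj, hc⟩
    obtain ⟨z, hz, hzw, hcz⟩ := h γ u hadj hc
    refine ⟨z, ⟨hz, ?_⟩, hcz⟩
    rw [Sym2.congr_right]; exact hzw
end A

section B
set_option linter.unusedSectionVars false
variable {V : Type*} [Fintype V] [DecidableEq V] {G : SimpleGraph V} [DecidableRel G.Adj]
  {c : Sym2 V → ℕ}

lemma nbang_of_min (hmin : EdgeMinimal G c) {v w x : V} (hvw : G.Adj v w)
    (hxw : G.Adj x w) (hxv : x ≠ v) (hc : c s(x, w) = c s(v, w)) :
    dColor G c v (c s(v, w)) = 1 := by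
  by_contra hne
  have hw : w ∈ NColor G c v (c s(v, w)) := by
    simp [NColor, hvw]
  have hpos : 1 ≤ (NColor G c v (c s(v, w))).card := Finset.card_pos.2 ⟨w, hw⟩
  have h2 : 1 < (NColor G c v (c s(v, w))).card := by
    rcases Nat.lt_or_ge 1 (NColor G c v (c s(v, w))).card with h | h
    · exact h
    · exact absurd (le_antisymm h hpos) (by simpa [dColor] using hne)
  obtain ⟨u, hu, hune⟩ := Finset.exists_mem_ne h2 w
  simp only [NColor, Finset.mem_filter, SimpleGraph.mem_neighborFinset] at hu
  have h1 : colorDeg (G.deleteEdges {s(v, w)}) c v = colorDeg G c v := by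
    apply colorDeg_del
    intro γ y hy hcy
    by_cases hyw : y = w
    · exact ⟨u, hu.1, hune, by rw [hu.2, ← hcy, hyw]⟩
    · exact ⟨y, hy, hyw, hcy⟩
  have hswap : ({s(v, w)} : Set (Sym2 V)) = {s(w, v)} := by rw [Sym2.eq_swap]
  have h2' : colorDeg (G.deleteEdges {s(v, w)}) c w = colorDeg G c w := by
    rw [hswap]
    apply colorDeg_del
    intro γ y hy hcy
    by_cases hyv : y = v
    · refine ⟨x, hxw.symm, hxv, ?_⟩
      rw [show s(w, x) = s(x, w) from Sym2.eq_swap, hc, ← hcy, hyv, Sym2.eq_swap]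
    · exact ⟨y, hy, hyv, hcy⟩
  rcases hmin v w hvw with hd | hd
  · rw [h1] at hd; exact lt_irrefl _ hd
  · rw [h2'] at hd; exact lt_irrefl _ hd
end B

section C
set_option linter.unusedSectionVars false
variable {V : Type*} [Fintype V] [DecidableEq V] {G : SimpleGraph V} [DecidableRel G.Adj]
  {c : Sym2 V → ℕ}

lemma key_bound (hmin : EdgeMinimal G c) (v x : V) (hx : G.Adj v x) :
    (colorDeg G c x : ℤ) + (G.degree v : ℤ) - (Fintype.card V : ℤ)
      - ((dColor G c v (c s(v, x)) : ℤ) - 1)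
      - (((NBangF G c v).filter fun w => G.Adj x w ∧ c s(x, w) = c s(v, w)).card : ℤ)
    ≤ (rtE G c v x : ℤ) := by
  set α := c s(v, x) with hα
  set N := G.neighborFinset v with hN
  set R : Finset V := Finset.univ.filter (fun w => IsRainbowTri G c v x w) with hR
  have hrtE : rtE G c v x = R.card := by
    rw [rtE, show {w | IsRainbowTri G c v x w} = ↑R by ext w; simp [hR],
      Set.ncard_coe_finset]
  set Cx : Finset ℕ :=
    (((G.neighborFinset x) ∩ N).image fun w => c s(x, w)).erase α with hCx
  set out : Finset V := ((G.neighborFinset x) \ N).erase v with hout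
  set im : Finset ℕ := out.image fun u => c s(x, u) with him'
  -- (a)
  have hsub : (G.neighborFinset x).image (fun u => c s(x, u)) ⊆ insert α (Cx ∪ im) := by
    intro β hβ
    simp only [Finset.mem_image, SimpleGraph.mem_neighborFinset] at hβ
    obtain ⟨u, hu, hcu⟩ := hβ
    by_cases hβα : β = α
    · simp [hβα]
    · refine Finset.mem_insert.2 (Or.inr (Finset.mem_union.2 ?_))
      by_cases huv : u ∈ N
      · exact Or.inl (Finset.mem_erase.2 ⟨hβα, Finset.mem_image.2
          ⟨u, Finset.mem_inter.2 ⟨(SimpleGraph.mem_neighborFinset _ _ _).2 hu, huv⟩, hcu⟩⟩)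
      · refine Or.inr (Finset.mem_image.2 ⟨u, ?_, hcu⟩)
        refine Finset.mem_erase.2 ⟨?_, Finset.mem_sdiff.2
          ⟨(SimpleGraph.mem_neighborFinset _ _ _).2 hu, huv⟩⟩
        rintro rfl
        exact hβα (by rw [← hcu, Sym2.eq_swap])
  have ha : colorDeg G c x ≤ Cx.card + 1 + im.card := by
    rw [colorDeg_eq]
    calc ((G.neighborFinset x).image fun u => c s(x, u)).card
        ≤ (insert α (Cx ∪ im)).card := Finset.card_le_card hsub
      _ ≤ (Cx ∪ im).card + 1 := Finset.card_insert_le _ _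
      _ ≤ Cx.card + im.card + 1 := by
          have := Finset.card_union_le Cx im; omega
      _ = Cx.card + 1 + im.card := by ring
  have ha2 : out.card + (N.card + 1) ≤ Fintype.card V := by
    have hdisj : Disjoint out (insert v N) := by
      rw [Finset.disjoint_left]
      intro a ha hain
      rw [hout, Finset.mem_erase, Finset.mem_sdiff] at ha
      rcases Finset.mem_insert.1 hain with rfl | h
      · exact ha.1 rfl
      · exact ha.2.2 h
    have hvN : v ∉ N := by
      rw [hN]; simp
    calc out.card + (N.card + 1) = (out ∪ insert v N).card := by
          rw [Finset.card_union_of_disjoint hdisj, Finset.card_insert_of_notMem hvN]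
      _ ≤ Fintype.card V := Finset.card_le_univ _
  -- bad/good sets
  set Mset := (NBangF G c v).filter (fun w => G.Adj x w ∧ c s(x, w) = c s(v, w)) with hM
  set good := Cx.filter (fun β => ∃ w, G.Adj x w ∧ G.Adj v w ∧ c s(x, w) = β ∧
    c s(v, w) ≠ α ∧ c s(v, w) ≠ β) with hgood
  set B1 := ((G.neighborFinset x ∩ NColor G c v α).image fun w => c s(x, w)) with hB1
  set B2 := Mset.image (fun w => c s(x, w)) with hB2
  have hcover : Cx ⊆ good ∪ B1 ∪ B2 := by
    intro β hβ
    have hβ' := hβ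
    rw [hCx, Finset.mem_erase] at hβ'
    obtain ⟨hβα, hβim⟩ := hβ'
    simp only [Finset.mem_image, Finset.mem_inter, SimpleGraph.mem_neighborFinset, hN] at hβim
    obtain ⟨w, ⟨hxw, hvw⟩, hcw⟩ := hβim
    by_cases h1 : c s(v, w) = α
    · refine Finset.mem_union.2 (Or.inl (Finset.mem_union.2 (Or.inr ?_)))
      exact Finset.mem_image.2 ⟨w, Finset.mem_inter.2
        ⟨(SimpleGraph.mem_neighborFinset _ _ _).2 hxw,
         Finset.mem_filter.2 ⟨(SimpleGraph.mem_neighborFinset _ _ _).2 hvw, h1⟩⟩, hcw⟩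
    by_cases h2 : c s(v, w) = β
    · refine Finset.mem_union.2 (Or.inr ?_)
      have hbang : dColor G c v (c s(v, w)) = 1 :=
        nbang_of_min hmin hvw hxw hx.ne' (hcw.trans h2.symm)
      refine Finset.mem_image.2 ⟨w, Finset.mem_filter.2 ⟨?_, hxw, hcw.trans h2.symm⟩, hcw⟩
      exact Finset.mem_filter.2 ⟨(SimpleGraph.mem_neighborFinset _ _ _).2 hvw, hbang⟩
    · exact Finset.mem_union.2 (Or.inl (Finset.mem_union.2 (Or.inl
        (Finset.mem_filter.2 ⟨hβ, w, hxw, hvw, hcw, h1, h2⟩))))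
  have hb : Cx.card ≤ good.card + B1.card + B2.card := by
    calc Cx.card ≤ (good ∪ B1 ∪ B2).card := Finset.card_le_card hcover
      _ ≤ (good ∪ B1).card + B2.card := Finset.card_union_le _ _
      _ ≤ good.card + B1.card + B2.card := by
          have := Finset.card_union_le good B1; omega
  have hgR : good.card ≤ R.card := by
    have hsubg : good ⊆ R.image (fun w => c s(x, w)) := by
      intro β hβ
      rw [hgood, Finset.mem_filter] at hβ
      obtain ⟨hβCx, w, hxw, hvw, hcw, h1, h2⟩ := hβ
      have hβα : β ≠ α := (Finset.mem_erase.1 hβCx).1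
      refine Finset.mem_image.2 ⟨w, Finset.mem_filter.2 ⟨Finset.mem_univ _, ?_⟩, hcw⟩
      exact ⟨hx, hvw, hxw, fun h => h1 h.symm, fun h => hβα (hcw ▸ h.symm ▸ rfl), by
        rw [hcw]; exact h2⟩
    calc good.card ≤ (R.image fun w => c s(x, w)).card := Finset.card_le_card hsubg
      _ ≤ R.card := Finset.card_image_le
  have hd : B1.card + 1 ≤ dColor G c v α := by
    have hxα : x ∈ NColor G c v α := Finset.mem_filter.2
      ⟨(SimpleGraph.mem_neighborFinset _ _ _).2 hx, rfl⟩
    have hsub1 : G.neighborFinset x ∩ NColor G c v α ⊆ (NColor G c v α).erase x := by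
      intro a ha
      rw [Finset.mem_inter] at ha
      exact Finset.mem_erase.2 ⟨((SimpleGraph.mem_neighborFinset _ _ _).1 ha.1).ne', ha.2⟩
    have h1 : B1.card ≤ ((NColor G c v α).erase x).card :=
      le_trans Finset.card_image_le (Finset.card_le_card hsub1)
    rw [Finset.card_erase_of_mem hxα] at h1
    have hpos : 1 ≤ (NColor G c v α).card := Finset.card_pos.2 ⟨x, hxα⟩
    unfold dColor
    omega
  have he : B2.card ≤ Mset.card := Finset.card_image_le
  have hie : im.card ≤ out.card := Finset.card_image_le
  have hdeg : G.degree v = N.card := rfl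
  rw [hrtE, hdeg]
  omega
end C

section D
set_option linter.unusedSectionVars false
variable {V : Type*} [Fintype V] [DecidableEq V] {G : SimpleGraph V} [DecidableRel G.Adj]
  {c : Sym2 V → ℕ}

lemma sum_rtE_le (v : V) :
    ∑ x ∈ G.neighborFinset v, rtE G c v x ≤ 2 * rtV G c v := by
  classical
  set TF := (Finset.univ : Finset (Sym2 V)).filter
    (fun p => ∃ x y, p = s(x, y) ∧ IsRainbowTri G c v x y) with hTF
  have hTV : rtV G c v = TF.card := by
    rw [rtV, show {p : Sym2 V | ∃ x y, p = s(x, y) ∧ IsRainbowTri G c v x y} = ↑TF by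
      ext p; simp [hTF], Set.ncard_coe_finset]
  set S := ((G.neighborFinset v) ×ˢ (Finset.univ : Finset V)).filter
    (fun p => IsRainbowTri G c v p.1 p.2) with hS
  have h1 : ∑ x ∈ G.neighborFinset v, rtE G c v x = S.card := by
    rw [Finset.card_eq_sum_card_fiberwise (f := Prod.fst) (t := G.neighborFinset v)
      (fun p hp => by
        simp only [Finset.mem_coe, hS, Finset.mem_filter, Finset.mem_product] at hp; exact hp.1.1)]
    refine Finset.sum_congr rfl fun x hx => ?_
    have hrw : rtE G c v x = (Finset.univ.filter (fun w => IsRainbowTri G c v x w)).card := by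
      rw [rtE, show {w | IsRainbowTri G c v x w}
        = ↑(Finset.univ.filter (fun w => IsRainbowTri G c v x w)) by ext w; simp,
        Set.ncard_coe_finset]
    rw [hrw]
    refine Finset.card_bij (fun w _ => (x, w)) ?_ ?_ ?_
    · intro w hw
      rw [Finset.mem_filter] at hw ⊢
      refine ⟨Finset.mem_filter.2 ⟨Finset.mem_product.2 ⟨hx, Finset.mem_univ _⟩, hw.2⟩, rfl⟩
    · intro a _ b _ h
      simpa using congrArg Prod.snd h
    · intro p hp
      rw [Finset.mem_filter] at hp
      obtain ⟨hpS, hpx⟩ := hp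
      rw [hS, Finset.mem_filter] at hpS
      refine ⟨p.2, Finset.mem_filter.2 ⟨Finset.mem_univ _, ?_⟩, Prod.ext hpx.symm rfl⟩
      have := hpS.2
      rwa [hpx] at this
  have h2 : S.card ≤ 2 * TF.card := by
    have himg : S.image (fun p => s(p.1, p.2)) ⊆ TF := by
      intro q hq
      obtain ⟨p, hp, rfl⟩ := Finset.mem_image.1 hq
      rw [hS, Finset.mem_filter] at hp
      exact Finset.mem_filter.2 ⟨Finset.mem_univ _, p.1, p.2, rfl, hp.2⟩
    calc S.card ≤ 2 * (S.image (fun p => s(p.1, p.2))).card := by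
          refine Finset.card_le_mul_card_image _ 2 fun a ha => ?_
          obtain ⟨p, hp, rfl⟩ := Finset.mem_image.1 ha
          have hsub : S.filter (fun q => s(q.1, q.2) = s(p.1, p.2)) ⊆ {p, (p.2, p.1)} := by
            intro q hq
            rw [Finset.mem_filter] at hq
            rcases Sym2.eq_iff.1 hq.2 with ⟨ha1, ha2⟩ | ⟨ha1, ha2⟩
            · exact Finset.mem_insert.2 (Or.inl (Prod.ext ha1 ha2))
            · refine Finset.mem_insert.2 (Or.inr (Finset.mem_singleton.2 (Prod.ext ?_ ?_)))
              · exact ha1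
              · exact ha2
          calc (S.filter (fun q => s(q.1, q.2) = s(p.1, p.2))).card
              ≤ ({p, (p.2, p.1)} : Finset (V × V)).card := Finset.card_le_card hsub
            _ ≤ 2 := by
                refine le_trans (Finset.card_insert_le _ _) ?_
                simp
      _ ≤ 2 * TF.card := Nat.mul_le_mul_left _ (Finset.card_le_card himg)
  rw [h1, hTV]
  exact h2

lemma sum_m_eq (v : V) :
    ∑ x ∈ G.neighborFinset v,
        ((NBangF G c v).filter (fun w => G.Adj x w ∧ c s(x, w) = c s(v, w))).card
      = ∑ y ∈ NBangF G c v, dColorIn G c y (c s(v, y)) (G.neighborFinset v) := by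
  simp_rw [Finset.card_filter]
  rw [Finset.sum_comm]
  refine Finset.sum_congr rfl fun y hy => ?_
  rw [dColorIn, Finset.card_filter]
  refine Finset.sum_congr rfl fun x hx => ?_
  refine if_congr ?_ rfl rfl
  rw [G.adj_comm x y, show (s(x, y) : Sym2 V) = s(y, x) from Sym2.eq_swap]
end D


/-- For an edge-minimal edge-colored graph `G` and a vertex `v`:
`2·rt(v) ≥ Σ_{x ∈ N(v)} (d^c(x)+d^c(v)-n) + d(v) Σ_γ (d_γ(v)-1)
 - Σ_γ d_γ(v)(d_γ(v)-1) - Σ_{y ∈ N_!(v)} d_{c(vy)}(y, N(v))`,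
where `γ` runs over all colors appearing at `v`. -/
theorem statement8 {V : Type*} [Fintype V] [DecidableEq V]
    (G : SimpleGraph V) [DecidableRel G.Adj] (c : Sym2 V → ℕ)
    (hmin : EdgeMinimal G c) (v : V) :
    (∑ x ∈ G.neighborFinset v,
        ((colorDeg G c x : ℤ) + (colorDeg G c v : ℤ) - (Fintype.card V : ℤ)))
      + (G.degree v : ℤ) *
          (∑ γ ∈ (G.neighborFinset v).image (fun u => c s(v, u)),
            ((dColor G c v γ : ℤ) - 1))
      - (∑ γ ∈ (G.neighborFinset v).image (fun u => c s(v, u)),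
          (dColor G c v γ : ℤ) * ((dColor G c v γ : ℤ) - 1))
      - (∑ y ∈ NBangF G c v, (dColorIn G c y (c s(v, y)) (G.neighborFinset v) : ℤ))
    ≤ 2 * (rtV G c v : ℤ) := by
    classical
  set N := G.neighborFinset v with hN
  set Γ := N.image (fun u => c s(v, u)) with hΓ
  have hkey : ∑ x ∈ N, ((colorDeg G c x : ℤ) + (G.degree v : ℤ) - (Fintype.card V : ℤ)
      - ((dColor G c v (c s(v, x)) : ℤ) - 1)
      - (((NBangF G c v).filter fun w => G.Adj x w ∧ c s(x, w) = c s(v, w)).card : ℤ))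
      ≤ ∑ x ∈ N, (rtE G c v x : ℤ) :=
    Finset.sum_le_sum fun x hx =>
      key_bound hmin v x ((SimpleGraph.mem_neighborFinset _ _ _).1 hx)
  have hsum2 : ∑ x ∈ N, (rtE G c v x : ℤ) ≤ 2 * (rtV G c v : ℤ) := by
    have h := sum_rtE_le (G := G) (c := c) v
    calc ∑ x ∈ N, (rtE G c v x : ℤ) = ((∑ x ∈ N, rtE G c v x : ℕ) : ℤ) := by push_cast; rfl
      _ ≤ ((2 * rtV G c v : ℕ) : ℤ) := by exact_mod_cast h
      _ = 2 * (rtV G c v : ℤ) := by push_cast; rfl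
  have hsd : ∑ γ ∈ Γ, (dColor G c v γ : ℤ) = (N.card : ℤ) := by
    have h2 : ∑ γ ∈ Γ, dColor G c v γ = N.card :=
      (Finset.card_eq_sum_card_image (fun u => c s(v, u)) N).symm
    exact_mod_cast h2
  have hsG : (colorDeg G c v : ℤ) = (Γ.card : ℤ) := by exact_mod_cast colorDeg_eq G c v
  have hI0 : ∑ x ∈ N, (dColor G c v (c s(v, x)) : ℤ)
      = ∑ γ ∈ Γ, (dColor G c v γ : ℤ) * (dColor G c v γ : ℤ) := by
    rw [Finset.sum_comp (fun γ => (dColor G c v γ : ℤ)) (fun x => c s(v, x))]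
    refine Finset.sum_congr rfl fun γ hγ => ?_
    rw [nsmul_eq_mul]
    norm_cast
  have hS2 : ∑ γ ∈ Γ, (dColor G c v γ : ℤ) * ((dColor G c v γ : ℤ) - 1)
      = (∑ γ ∈ Γ, (dColor G c v γ : ℤ) * (dColor G c v γ : ℤ)) - (N.card : ℤ) := by
    calc ∑ γ ∈ Γ, (dColor G c v γ : ℤ) * ((dColor G c v γ : ℤ) - 1)
        = ∑ γ ∈ Γ, ((dColor G c v γ : ℤ) * (dColor G c v γ : ℤ) - (dColor G c v γ : ℤ)) :=
          Finset.sum_congr rfl fun γ _ => by ring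
      _ = (∑ γ ∈ Γ, (dColor G c v γ : ℤ) * (dColor G c v γ : ℤ))
            - ∑ γ ∈ Γ, (dColor G c v γ : ℤ) := Finset.sum_sub_distrib _ _
      _ = _ := by rw [hsd]
  have hIII : ∑ x ∈ N, ((((NBangF G c v).filter
        fun w => G.Adj x w ∧ c s(x, w) = c s(v, w)).card : ℕ) : ℤ)
      = ∑ y ∈ NBangF G c v, (dColorIn G c y (c s(v, y)) N : ℤ) := by
    have h := sum_m_eq (G := G) (c := c) v
    exact_mod_cast h
  have hdeg : (G.degree v : ℤ) = (N.card : ℤ) := by norm_cast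
  simp only [Finset.sum_sub_distrib, Finset.sum_add_distrib, Finset.sum_const,
    nsmul_eq_mul, mul_one] at hkey ⊢
  rw [hS2, hsd, hsG, hdeg] at *
  rw [hI0] at hkey
  rw [hIII] at hkey
  linarith [hkey, hsum2]
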